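/- Let 𝔣 be an ideal of the ring of integers O_K of an imaginary quadratic field, coprime to 𝔪, and let I, J be ideals coprime to 𝔣 and 𝔪 with 𝔣·J = (α)·I for some α ∈ K^×. Then as b ranges over a set of representatives of (O_K/𝔣)^×, and d_b ∈ J is chosen with d_b ≡ b (mod 𝔣), the elements a = d_b/α range over a complete set of coset representatives of the classes [a] ∈ 𝔣⁻¹/O_K with (a)𝔣 coprime to 𝔣. -/

import Mathlib

lemma aux_unit_iff_coprime {R : Type*} [CommRing R] {𝔣 : Ideal R} {b : R} :
    IsUnit (Ideal.Quotient.mk 𝔣 b) ↔ IsCoprime (Ideal.span {b}) 𝔣 := by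
  constructor
  · rintro ⟨u, hu⟩
    obtain ⟨c, hc⟩ := Ideal.Quotient.mk_surjective (I := 𝔣) (↑u⁻¹)
    have h1 : Ideal.Quotient.mk 𝔣 (b * c) = 1 := by
      rw [map_mul, ← hu, hc]; exact u.mul_inv
    have h2 : b * c - 1 ∈ 𝔣 := by
      rw [← Ideal.Quotient.eq_zero_iff_mem, map_sub, h1, map_one, sub_self]
    rw [Ideal.isCoprime_iff_exists]
    exact ⟨b * c, Ideal.mem_span_singleton'.mpr ⟨c, mul_comm c b⟩, 1 - b * c,
      by simpa using 𝔣.neg_mem h2, by ring⟩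
  · intro h
    obtain ⟨i, hi, j, hj, hij⟩ := Ideal.isCoprime_iff_exists.mp h
    obtain ⟨c, hc⟩ := Ideal.mem_span_singleton'.mp hi
    refine IsUnit.of_mul_eq_one (Ideal.Quotient.mk 𝔣 c) ?_
    have hz : Ideal.Quotient.mk 𝔣 j = 0 := Ideal.Quotient.eq_zero_iff_mem.mpr hj
    calc Ideal.Quotient.mk 𝔣 b * Ideal.Quotient.mk 𝔣 c
        = Ideal.Quotient.mk 𝔣 (c * b) + Ideal.Quotient.mk 𝔣 j := by
          rw [hz, add_zero, ← map_mul, mul_comm]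
      _ = 1 := by rw [← map_add, hc, hij, map_one]



open NumberField FractionalIdeal nonZeroDivisors

/-- Let `𝔣` be an ideal of the ring of integers `O_K` of an imaginary
quadratic field, coprime to `𝔪`, and let `I, J` be ideals coprime to `𝔣` and `𝔪` with
`𝔣·J = (α)·I` for some `α ∈ K^×`.  Then as `b` ranges over representatives of the
unit classes of `(O_K/𝔣)^×`, and `d_b ∈ J` is chosen with `d_b ≡ b (mod 𝔣)`, the
elements `a = d_b/α` range over a complete set of coset representatives of the classes
`[a] ∈ 𝔣⁻¹/O_K` with `(a)𝔣` coprime to `𝔣`: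
(1) each such `a` lies in `𝔣⁻¹` and `(a)𝔣` is coprime to `𝔣` (expressed as
`(a)𝔣 ⊔ 𝔣 = 1` among fractional ideals);
(2) distinct unit classes `b` give distinct classes modulo `O_K`;
(3) every class `[a] ∈ 𝔣⁻¹/O_K` with `(a)𝔣` coprime to `𝔣` arises this way. -/
theorem stmt16 (K : Type*) [Field K] [NumberField K]
    (hdeg : Module.finrank ℚ K = 2)
    (himag : ∀ v : NumberField.InfinitePlace K, v.IsComplex)
    (𝔪 𝔣 I J : Ideal (𝓞 K)) (h𝔣bot : 𝔣 ≠ ⊥)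
    (h𝔣𝔪 : IsCoprime 𝔣 𝔪) (hI𝔣 : IsCoprime I 𝔣) (hI𝔪 : IsCoprime I 𝔪)
    (hJ𝔣 : IsCoprime J 𝔣) (hJ𝔪 : IsCoprime J 𝔪)
    (α : K) (hα : α ≠ 0)
    (hfac : (𝔣 : FractionalIdeal (𝓞 K)⁰ K) * (J : FractionalIdeal (𝓞 K)⁰ K) =
      FractionalIdeal.spanSingleton (𝓞 K)⁰ α * (I : FractionalIdeal (𝓞 K)⁰ K))
    (d : 𝓞 K → 𝓞 K) (hdJ : ∀ b : 𝓞 K, d b ∈ J) (hdb : ∀ b : 𝓞 K, d b - b ∈ 𝔣) :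
    (∀ b : 𝓞 K, IsUnit (Ideal.Quotient.mk 𝔣 b) →
      algebraMap (𝓞 K) K (d b) / α ∈ ((𝔣 : FractionalIdeal (𝓞 K)⁰ K))⁻¹ ∧
      FractionalIdeal.spanSingleton (𝓞 K)⁰ (algebraMap (𝓞 K) K (d b) / α) *
          (𝔣 : FractionalIdeal (𝓞 K)⁰ K) ⊔ (𝔣 : FractionalIdeal (𝓞 K)⁰ K) = 1) ∧
    (∀ b b' : 𝓞 K, IsUnit (Ideal.Quotient.mk 𝔣 b) → IsUnit (Ideal.Quotient.mk 𝔣 b') →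
      (algebraMap (𝓞 K) K (d b) / α - algebraMap (𝓞 K) K (d b') / α) ∈
        (1 : FractionalIdeal (𝓞 K)⁰ K) →
      Ideal.Quotient.mk 𝔣 b = Ideal.Quotient.mk 𝔣 b') ∧
    (∀ a : K, a ∈ ((𝔣 : FractionalIdeal (𝓞 K)⁰ K))⁻¹ →
      FractionalIdeal.spanSingleton (𝓞 K)⁰ a * (𝔣 : FractionalIdeal (𝓞 K)⁰ K) ⊔
          (𝔣 : FractionalIdeal (𝓞 K)⁰ K) = 1 →
      ∃ b : 𝓞 K, IsUnit (Ideal.Quotient.mk 𝔣 b) ∧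
        a - algebraMap (𝓞 K) K (d b) / α ∈ (1 : FractionalIdeal (𝓞 K)⁰ K)) := by
  by_cases hJbot : J = ⊥
  · -- degenerate case : J = ⊥, hence 𝔣 = ⊤ and d b = 0 always
    subst hJbot
    have h𝔣top : 𝔣 = ⊤ := by
      obtain ⟨i, hi, j, hj, hij⟩ := Ideal.isCoprime_iff_exists.mp hJ𝔣
      rw [Ideal.mem_bot] at hi
      subst hi
      rw [zero_add] at hij
      subst hij
      exact (Ideal.eq_top_iff_one 𝔣).mpr hj
    have hd0 : ∀ b : 𝓞 K, d b = 0 := fun b => by simpa using hdJ b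
    have h𝔣coe : (𝔣 : FractionalIdeal (𝓞 K)⁰ K) = 1 := by
      rw [h𝔣top]; exact coeIdeal_top _
    refine ⟨?_, ?_, ?_⟩
    · intro b _
      constructor
      · rw [hd0 b, _root_.map_zero, zero_div]
        exact zero_mem _
      · rw [hd0 b, _root_.map_zero, zero_div, spanSingleton_zero, zero_mul, h𝔣coe]
        exact sup_eq_right.mpr (FractionalIdeal.zero_le _)
    · intro b b' _ _ _
      rw [Ideal.Quotient.mk_eq_mk_iff_sub_mem, h𝔣top]
      trivial
    · intro a ha _
      refine ⟨1, by simp, ?_⟩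
      rw [hd0 1, _root_.map_zero, zero_div, sub_zero]
      rwa [h𝔣coe, inv_one] at ha
  · -- main case
    have hJ0 : (J : FractionalIdeal (𝓞 K)⁰ K) ≠ 0 := coeIdeal_ne_zero.mpr hJbot
    have hF0 : (𝔣 : FractionalIdeal (𝓞 K)⁰ K) ≠ 0 := coeIdeal_ne_zero.mpr h𝔣bot
    have hαs : spanSingleton (𝓞 K)⁰ α ≠ 0 := spanSingleton_ne_zero_iff.mpr hα
    have hI0 : (I : FractionalIdeal (𝓞 K)⁰ K) ≠ 0 := by
      intro h
      exact mul_ne_zero hF0 hJ0 (by rw [hfac, h, mul_zero])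
    have main : ∀ c : 𝓞 K, c ∈ J → ∃ A : Ideal (𝓞 K),
        (A : FractionalIdeal (𝓞 K)⁰ K) =
          spanSingleton (𝓞 K)⁰ (algebraMap (𝓞 K) K c / α) * (𝔣 : FractionalIdeal (𝓞 K)⁰ K) ∧
        A * J = Ideal.span {c} * I := by
      intro c hc
      set x : K := algebraMap (𝓞 K) K c / α with hxdef
      have hxα : spanSingleton (𝓞 K)⁰ x * spanSingleton (𝓞 K)⁰ α
          = spanSingleton (𝓞 K)⁰ (algebraMap (𝓞 K) K c) := by
        rw [spanSingleton_mul_spanSingleton, hxdef, div_mul_cancel₀ _ hα]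
      have hXJ : spanSingleton (𝓞 K)⁰ x * (𝔣 : FractionalIdeal (𝓞 K)⁰ K) * J
          = ((Ideal.span {c} * I : Ideal (𝓞 K)) : FractionalIdeal (𝓞 K)⁰ K) := by
        rw [mul_assoc, hfac, ← mul_assoc, hxα, coeIdeal_mul, coeIdeal_span_singleton]
      have hXle : spanSingleton (𝓞 K)⁰ x * (𝔣 : FractionalIdeal (𝓞 K)⁰ K) ≤ 1 := by
        have hX : spanSingleton (𝓞 K)⁰ x * (𝔣 : FractionalIdeal (𝓞 K)⁰ K)
            = ((Ideal.span {c} * I : Ideal (𝓞 K)) : FractionalIdeal (𝓞 K)⁰ K)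
              * (J : FractionalIdeal (𝓞 K)⁰ K)⁻¹ := by
          rw [← hXJ, mul_assoc, mul_inv_cancel₀ hJ0, mul_one]
        rw [hX]
        calc ((Ideal.span {c} * I : Ideal (𝓞 K)) : FractionalIdeal (𝓞 K)⁰ K)
              * (J : FractionalIdeal (𝓞 K)⁰ K)⁻¹
            ≤ ((J * I : Ideal (𝓞 K)) : FractionalIdeal (𝓞 K)⁰ K)
              * (J : FractionalIdeal (𝓞 K)⁰ K)⁻¹ := by
              apply mul_left_mono
              exact coeIdeal_le_coeIdeal K |>.mpr
                (Ideal.mul_mono_left ((Ideal.span_le).mpr (by simpa using hc)))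
          _ = (I : FractionalIdeal (𝓞 K)⁰ K)
              * ((J : FractionalIdeal (𝓞 K)⁰ K) * (J : FractionalIdeal (𝓞 K)⁰ K)⁻¹) := by
              rw [coeIdeal_mul]; ring
          _ ≤ 1 := by
              rw [mul_inv_cancel₀ hJ0, mul_one]; exact coeIdeal_le_one
      obtain ⟨A, hA⟩ := le_one_iff_exists_coeIdeal.mp hXle
      refine ⟨A, hA, coeIdeal_injective (K := K) ?_⟩
      push_cast
      rw [hA, hXJ]
      push_cast
      ring
    -- membership in 𝔣⁻¹ from main
    have mem𝔣inv : ∀ c : 𝓞 K, c ∈ J →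
        algebraMap (𝓞 K) K c / α ∈ ((𝔣 : FractionalIdeal (𝓞 K)⁰ K))⁻¹ := by
      intro c hc
      obtain ⟨A, hA, -⟩ := main c hc
      have h1 : spanSingleton (𝓞 K)⁰ (algebraMap (𝓞 K) K c / α)
          = (A : FractionalIdeal (𝓞 K)⁰ K) * ((𝔣 : FractionalIdeal (𝓞 K)⁰ K))⁻¹ := by
        rw [hA, mul_assoc, mul_inv_cancel₀ hF0, mul_one]
      have h2 : spanSingleton (𝓞 K)⁰ (algebraMap (𝓞 K) K c / α)
          ≤ ((𝔣 : FractionalIdeal (𝓞 K)⁰ K))⁻¹ := by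
        rw [h1]
        calc (A : FractionalIdeal (𝓞 K)⁰ K) * ((𝔣 : FractionalIdeal (𝓞 K)⁰ K))⁻¹
            ≤ 1 * ((𝔣 : FractionalIdeal (𝓞 K)⁰ K))⁻¹ :=
              mul_left_mono coeIdeal_le_one
          _ = ((𝔣 : FractionalIdeal (𝓞 K)⁰ K))⁻¹ := one_mul _
      exact h2 (mem_spanSingleton_self _ _)
    refine ⟨?_, ?_, ?_⟩
    · -- part 1
      intro b hb
      obtain ⟨A, hA, hAJ⟩ := main (d b) (hdJ b)
      refine ⟨mem𝔣inv (d b) (hdJ b), ?_⟩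
      have hdbu : IsUnit (Ideal.Quotient.mk 𝔣 (d b)) := by
        rwa [(Ideal.Quotient.mk_eq_mk_iff_sub_mem (d b) b).mpr (hdb b)]
      have hcop1 : IsCoprime (Ideal.span {d b}) 𝔣 := aux_unit_iff_coprime.mp hdbu
      have hcop2 : IsCoprime (A * J) 𝔣 := hAJ ▸ hcop1.mul_left hI𝔣
      have hcopA : IsCoprime A 𝔣 := hcop2.of_mul_left_left
      rw [← hA, sup_eq_add, ← coeIdeal_sup, hcopA.sup_eq]
      exact coeIdeal_top _
    · -- part 2
      intro b b' hb hb' hmem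
      rw [div_sub_div_same, ← map_sub] at hmem
      obtain ⟨n, hn⟩ := (mem_one_iff _).mp hmem
      have hx : algebraMap (𝓞 K) K (d b - d b') = α * algebraMap (𝓞 K) K n := by
        rw [hn]; field_simp
      have hspan : spanSingleton (𝓞 K)⁰ (algebraMap (𝓞 K) K (d b - d b'))
          = spanSingleton (𝓞 K)⁰ α * spanSingleton (𝓞 K)⁰ (algebraMap (𝓞 K) K n) := by
        rw [spanSingleton_mul_spanSingleton, hx]
      have hideq : Ideal.span {d b - d b'} * I = 𝔣 * (J * Ideal.span {n}) := by
        apply coeIdeal_injective (K := K)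
        push_cast
        rw [coeIdeal_span_singleton, coeIdeal_span_singleton]
        calc spanSingleton (𝓞 K)⁰ (algebraMap (𝓞 K) K (d b - d b'))
              * (I : FractionalIdeal (𝓞 K)⁰ K)
            = (𝔣 : FractionalIdeal (𝓞 K)⁰ K) * (J : FractionalIdeal (𝓞 K)⁰ K)
              * spanSingleton (𝓞 K)⁰ (algebraMap (𝓞 K) K n) := by rw [hspan, hfac]; ring
          _ = (𝔣 : FractionalIdeal (𝓞 K)⁰ K) * ((J : FractionalIdeal (𝓞 K)⁰ K)
              * spanSingleton (𝓞 K)⁰ (algebraMap (𝓞 K) K n)) := by ring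
      have hdvd : 𝔣 ∣ Ideal.span {d b - d b'} := by
        refine (hI𝔣.symm.dvd_of_dvd_mul_right ⟨J * Ideal.span {n}, hideq⟩)
      have hmem𝔣 : d b - d b' ∈ 𝔣 :=
        (Ideal.span_le.mp (Ideal.le_of_dvd hdvd)) (by simp)
      rw [Ideal.Quotient.mk_eq_mk_iff_sub_mem]
      have : b - b' = -(d b - b) + (d b - d b') + (d b' - b') := by ring
      rw [this]
      exact add_mem (add_mem (neg_mem (hdb b)) hmem𝔣) (hdb b')
    · -- part 3
      intro a ha hsup
      by_cases h𝔣top : 𝔣 = ⊤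
      · refine ⟨1, by simp, ?_⟩
        have h𝔣coe : (𝔣 : FractionalIdeal (𝓞 K)⁰ K) = 1 := by
          rw [h𝔣top]; exact coeIdeal_top _
        have h1 : a ∈ (1 : FractionalIdeal (𝓞 K)⁰ K) := by rwa [h𝔣coe, inv_one] at ha
        have h2 : algebraMap (𝓞 K) K (d 1) / α ∈ (1 : FractionalIdeal (𝓞 K)⁰ K) := by
          have h3 := mem𝔣inv (d 1) (hdJ 1)
          rwa [h𝔣coe, inv_one] at h3
        obtain ⟨x₁, hx₁⟩ := (mem_one_iff _).mp h1
        obtain ⟨x₂, hx₂⟩ := (mem_one_iff _).mp h2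
        exact (mem_one_iff _).mpr ⟨x₁ - x₂, by rw [_root_.map_sub, hx₁, hx₂]⟩
      · have hXle : spanSingleton (𝓞 K)⁰ a * (𝔣 : FractionalIdeal (𝓞 K)⁰ K) ≤ 1 := by
          have h1 : spanSingleton (𝓞 K)⁰ a ≤ ((𝔣 : FractionalIdeal (𝓞 K)⁰ K))⁻¹ :=
            spanSingleton_le_iff_mem.mpr ha
          calc spanSingleton (𝓞 K)⁰ a * (𝔣 : FractionalIdeal (𝓞 K)⁰ K)
              ≤ ((𝔣 : FractionalIdeal (𝓞 K)⁰ K))⁻¹ * (𝔣 : FractionalIdeal (𝓞 K)⁰ K) :=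
                mul_left_mono h1
            _ = 1 := by rw [mul_comm, mul_inv_cancel₀ hF0]
        obtain ⟨A, hA⟩ := le_one_iff_exists_coeIdeal.mp hXle
        have hAcop : IsCoprime A 𝔣 := by
          rw [Ideal.isCoprime_iff_sup_eq]
          apply coeIdeal_injective (K := K)
          show ((A ⊔ 𝔣 : Ideal (𝓞 K)) : FractionalIdeal (𝓞 K)⁰ K)
            = ((⊤ : Ideal (𝓞 K)) : FractionalIdeal (𝓞 K)⁰ K)
          rw [coeIdeal_sup, ← sup_eq_add, hA, hsup]
          exact (coeIdeal_top _).symm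
        have h1mem : (1 : 𝓞 K) ∈ I ⊔ 𝔣 := by rw [hI𝔣.sup_eq]; trivial
        obtain ⟨t, ht, y, hy, hty⟩ := Submodule.mem_sup.mp h1mem
        have htne : t ≠ 0 := by
          rintro rfl
          rw [zero_add] at hty
          exact h𝔣top ((Ideal.eq_top_iff_one 𝔣).mpr (hty ▸ hy))
        have hsptle : ((Ideal.span {t} : Ideal (𝓞 K)) : FractionalIdeal (𝓞 K)⁰ K)
            * ((I : FractionalIdeal (𝓞 K)⁰ K))⁻¹ ≤ 1 := by
          calc ((Ideal.span {t} : Ideal (𝓞 K)) : FractionalIdeal (𝓞 K)⁰ K)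
              * ((I : FractionalIdeal (𝓞 K)⁰ K))⁻¹
              ≤ (I : FractionalIdeal (𝓞 K)⁰ K) * ((I : FractionalIdeal (𝓞 K)⁰ K))⁻¹ :=
                mul_left_mono (coeIdeal_le_coeIdeal K |>.mpr
                  (Ideal.span_le.mpr (by simpa using ht)))
            _ = 1 := mul_inv_cancel₀ hI0
        obtain ⟨T, hT⟩ := le_one_iff_exists_coeIdeal.mp hsptle
        have hTI : ((T * I : Ideal (𝓞 K)) : FractionalIdeal (𝓞 K)⁰ K)
            = ((Ideal.span {t} : Ideal (𝓞 K)) : FractionalIdeal (𝓞 K)⁰ K) := by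
          push_cast
          rw [hT, mul_assoc, inv_mul_cancel₀ hI0, mul_one]
        have hTIid : T * I = Ideal.span {t} := coeIdeal_injective (K := K) hTI
        have htT : t ∈ T := by
          have h := Ideal.mem_span_singleton_self t
          rw [← hTIid] at h
          exact Ideal.mul_le_left h
        have hTcop : IsCoprime T 𝔣 := by
          have h1 : IsCoprime (Ideal.span {t}) 𝔣 := Ideal.isCoprime_iff_exists.mpr
            ⟨t, Ideal.mem_span_singleton_self t, y, hy, hty⟩
          rw [← hTIid] at h1
          exact h1.of_mul_left_left
        have hkey : spanSingleton (𝓞 K)⁰ (algebraMap (𝓞 K) K t * (α * a))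
            = ((T * J * A : Ideal (𝓞 K)) : FractionalIdeal (𝓞 K)⁰ K) := by
          apply mul_right_cancel₀ (b := (I : FractionalIdeal (𝓞 K)⁰ K)
            * (𝔣 : FractionalIdeal (𝓞 K)⁰ K)) (mul_ne_zero hI0 hF0)
          calc spanSingleton (𝓞 K)⁰ (algebraMap (𝓞 K) K t * (α * a))
              * ((I : FractionalIdeal (𝓞 K)⁰ K) * (𝔣 : FractionalIdeal (𝓞 K)⁰ K))
              = spanSingleton (𝓞 K)⁰ (algebraMap (𝓞 K) K t)
                * ((spanSingleton (𝓞 K)⁰ α * (I : FractionalIdeal (𝓞 K)⁰ K))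
                  * (spanSingleton (𝓞 K)⁰ a * (𝔣 : FractionalIdeal (𝓞 K)⁰ K))) := by
                rw [← spanSingleton_mul_spanSingleton, ← spanSingleton_mul_spanSingleton]
                ring
            _ = ((Ideal.span {t} : Ideal (𝓞 K)) : FractionalIdeal (𝓞 K)⁰ K)
                * (((𝔣 : FractionalIdeal (𝓞 K)⁰ K) * (J : FractionalIdeal (𝓞 K)⁰ K))
                  * (A : FractionalIdeal (𝓞 K)⁰ K)) := by
                rw [coeIdeal_span_singleton, ← hfac, ← hA]
            _ = ((T * I : Ideal (𝓞 K)) : FractionalIdeal (𝓞 K)⁰ K)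
                * (((𝔣 : FractionalIdeal (𝓞 K)⁰ K) * (J : FractionalIdeal (𝓞 K)⁰ K))
                  * (A : FractionalIdeal (𝓞 K)⁰ K)) := by rw [hTI]
            _ = ((T * J * A : Ideal (𝓞 K)) : FractionalIdeal (𝓞 K)⁰ K)
                * ((I : FractionalIdeal (𝓞 K)⁰ K) * (𝔣 : FractionalIdeal (𝓞 K)⁰ K)) := by
                push_cast
                ring
        have humem : algebraMap (𝓞 K) K t * (α * a)
            ∈ ((T * J * A : Ideal (𝓞 K)) : FractionalIdeal (𝓞 K)⁰ K) := by
          rw [← hkey]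
          exact mem_spanSingleton_self _ _
        obtain ⟨u₀, hu₀⟩ := (mem_one_iff _).mp (coeIdeal_le_one humem)
        have hspanu : Ideal.span {u₀} = T * J * A := by
          apply coeIdeal_injective (K := K)
          show ((Ideal.span {u₀} : Ideal (𝓞 K)) : FractionalIdeal (𝓞 K)⁰ K)
            = ((T * J * A : Ideal (𝓞 K)) : FractionalIdeal (𝓞 K)⁰ K)
          rw [coeIdeal_span_singleton, hu₀, hkey]
        have hu₀cop : IsCoprime (Ideal.span {u₀}) 𝔣 := by
          rw [hspanu]
          exact (hTcop.mul_left hJ𝔣).mul_left hAcop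
        refine ⟨u₀, aux_unit_iff_coprime.mpr hu₀cop, ?_⟩
        set w := d u₀ with hwdef
        set s : 𝓞 K := u₀ - t * w with hsdef
        have hs𝔣 : s ∈ 𝔣 := by
          have h1 : w - u₀ ∈ 𝔣 := hdb u₀
          have h2 : (1 : 𝓞 K) - t ∈ 𝔣 := by
            have h3 : (1 : 𝓞 K) - t = y := by rw [← hty]; ring
            rw [h3]; exact hy
          have h4 : s = -(w - u₀) + ((1 : 𝓞 K) - t) * w := by rw [hsdef]; ring
          rw [h4]
          exact add_mem (neg_mem h1) (Ideal.mul_mem_right _ _ h2)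
        have hsTJ : s ∈ T * J := by
          have h1 : u₀ ∈ T * J := by
            have h := Ideal.mem_span_singleton_self u₀
            rw [hspanu] at h
            exact Ideal.mul_le_left h
          exact sub_mem h1 (Ideal.mul_mem_mul htT (hdJ u₀))
        have hsmem : s ∈ 𝔣 * (T * J) := by
          rw [← Ideal.inf_eq_mul_of_isCoprime ((hTcop.mul_left hJ𝔣).symm)]
          exact Submodule.mem_inf.mpr ⟨hs𝔣, hsTJ⟩
        have heq : (a - algebraMap (𝓞 K) K w / α) * (algebraMap (𝓞 K) K t * α)
            = algebraMap (𝓞 K) K s := by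
          have h1 : algebraMap (𝓞 K) K s
              = algebraMap (𝓞 K) K u₀ - algebraMap (𝓞 K) K t * algebraMap (𝓞 K) K w := by
            rw [hsdef, _root_.map_sub, _root_.map_mul]
          rw [h1, hu₀]
          field_simp
        have hTbot : T ≠ ⊥ := by
          intro h
          apply htne
          have h2 : Ideal.span {t} = (⊥ : Ideal (𝓞 K)) := by rw [← hTIid, h]; simp
          rwa [Ideal.span_singleton_eq_bot] at h2
        have hprodne : ((𝔣 : FractionalIdeal (𝓞 K)⁰ K) * ((T : FractionalIdeal (𝓞 K)⁰ K)
            * (J : FractionalIdeal (𝓞 K)⁰ K))) ≠ 0 :=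
          mul_ne_zero hF0 (mul_ne_zero (coeIdeal_ne_zero.mpr hTbot) hJ0)
        have hc3 : ((Ideal.span {t} : Ideal (𝓞 K)) : FractionalIdeal (𝓞 K)⁰ K)
            * spanSingleton (𝓞 K)⁰ α = (𝔣 : FractionalIdeal (𝓞 K)⁰ K)
              * ((T : FractionalIdeal (𝓞 K)⁰ K) * (J : FractionalIdeal (𝓞 K)⁰ K)) := by
          apply mul_right_cancel₀ hI0
          calc ((Ideal.span {t} : Ideal (𝓞 K)) : FractionalIdeal (𝓞 K)⁰ K)
              * spanSingleton (𝓞 K)⁰ α * (I : FractionalIdeal (𝓞 K)⁰ K)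
              = ((T * I : Ideal (𝓞 K)) : FractionalIdeal (𝓞 K)⁰ K)
                * (spanSingleton (𝓞 K)⁰ α * (I : FractionalIdeal (𝓞 K)⁰ K)) := by
                rw [hTI]; ring
            _ = ((T : FractionalIdeal (𝓞 K)⁰ K) * (I : FractionalIdeal (𝓞 K)⁰ K))
                * ((𝔣 : FractionalIdeal (𝓞 K)⁰ K) * (J : FractionalIdeal (𝓞 K)⁰ K)) := by
                rw [← hfac]; push_cast; ring
            _ = (𝔣 : FractionalIdeal (𝓞 K)⁰ K) * ((T : FractionalIdeal (𝓞 K)⁰ K)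
                * (J : FractionalIdeal (𝓞 K)⁰ K)) * (I : FractionalIdeal (𝓞 K)⁰ K) := by
                ring
        have hfin : spanSingleton (𝓞 K)⁰ (a - algebraMap (𝓞 K) K w / α)
            * ((𝔣 : FractionalIdeal (𝓞 K)⁰ K) * ((T : FractionalIdeal (𝓞 K)⁰ K)
              * (J : FractionalIdeal (𝓞 K)⁰ K)))
            = ((Ideal.span {s} : Ideal (𝓞 K)) : FractionalIdeal (𝓞 K)⁰ K) := by
          rw [← hc3, coeIdeal_span_singleton, spanSingleton_mul_spanSingleton,
            spanSingleton_mul_spanSingleton, heq, coeIdeal_span_singleton]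
        have hsle : ((Ideal.span {s} : Ideal (𝓞 K)) : FractionalIdeal (𝓞 K)⁰ K)
            ≤ (𝔣 : FractionalIdeal (𝓞 K)⁰ K) * ((T : FractionalIdeal (𝓞 K)⁰ K)
              * (J : FractionalIdeal (𝓞 K)⁰ K)) := by
          have h1 : ((Ideal.span {s} : Ideal (𝓞 K)) : FractionalIdeal (𝓞 K)⁰ K)
              ≤ ((𝔣 * (T * J) : Ideal (𝓞 K)) : FractionalIdeal (𝓞 K)⁰ K) :=
            coeIdeal_le_coeIdeal K |>.mpr (Ideal.span_le.mpr (by simpa using hsmem))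
          rwa [coeIdeal_mul, coeIdeal_mul] at h1
        have hxle : spanSingleton (𝓞 K)⁰ (a - algebraMap (𝓞 K) K w / α) ≤ 1 := by
          have h1 : spanSingleton (𝓞 K)⁰ (a - algebraMap (𝓞 K) K w / α)
              = ((Ideal.span {s} : Ideal (𝓞 K)) : FractionalIdeal (𝓞 K)⁰ K)
                * ((𝔣 : FractionalIdeal (𝓞 K)⁰ K) * ((T : FractionalIdeal (𝓞 K)⁰ K)
                  * (J : FractionalIdeal (𝓞 K)⁰ K)))⁻¹ := by
            rw [← hfin, mul_assoc, mul_inv_cancel₀ hprodne, mul_one]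
          rw [h1]
          calc ((Ideal.span {s} : Ideal (𝓞 K)) : FractionalIdeal (𝓞 K)⁰ K)
              * ((𝔣 : FractionalIdeal (𝓞 K)⁰ K) * ((T : FractionalIdeal (𝓞 K)⁰ K)
                * (J : FractionalIdeal (𝓞 K)⁰ K)))⁻¹
              ≤ ((𝔣 : FractionalIdeal (𝓞 K)⁰ K) * ((T : FractionalIdeal (𝓞 K)⁰ K)
                * (J : FractionalIdeal (𝓞 K)⁰ K)))
                * ((𝔣 : FractionalIdeal (𝓞 K)⁰ K) * ((T : FractionalIdeal (𝓞 K)⁰ K)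
                  * (J : FractionalIdeal (𝓞 K)⁰ K)))⁻¹ :=
                mul_left_mono hsle
            _ = 1 := mul_inv_cancel₀ hprodne
        exact hxle (mem_spanSingleton_self _ _)
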